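/- With the hypotheses of the preceding statement and additionally d(o,(e₁,0)) = d(o,(0,f₁)) =: β (condition (Eq)), one has d = β·d_𝔥^α, i.e. d(p,q) = β·d_𝔥(p,q)^α for all p,q in the Heisenberg group. -/

import Mathlib

/-! An abstract model of the `K`-Heisenberg group `𝔥 = K^{n-1} × Im(K)`: `V` plays the role
of `K^{n-1}`, `W` that of `Im(K)`, and `ω` is the (alternating bilinear) symplectic form. -/

section Heisenberg

variable {V W : Type*} [NormedAddCommGroup V] [NormedSpace ℝ V]
  [NormedAddCommGroup W] [NormedSpace ℝ W]

/-- The Heisenberg product `(ζ,v)*(ζ',v') = (ζ+ζ', v+v'+2ω(ζ,ζ'))`. -/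
def hMul (ω : V →ₗ[ℝ] V →ₗ[ℝ] W) (p q : V × W) : V × W :=
  (p.1 + q.1, p.2 + q.2 + (2 : ℝ) • ω p.1 q.1)

/-- The Heisenberg inverse `(ζ,v)⁻¹ = (-ζ,-v)`. -/
def hInv (p : V × W) : V × W := (-p.1, -p.2)

/-- The Korányi gauge `|(ζ,v)| = (‖ζ‖⁴ + |v|²)^{1/4}`. -/
noncomputable def korGauge (p : V × W) : ℝ := (‖p.1‖ ^ 4 + ‖p.2‖ ^ 2) ^ ((1 : ℝ) / 4)

/-- The Korányi metric `d_𝔥(p,q) = |q⁻¹ * p|`. -/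
noncomputable def dKor (ω : V →ₗ[ℝ] V →ₗ[ℝ] W) (p q : V × W) : ℝ :=
  korGauge (hMul ω (hInv q) p)

/-- The Heisenberg dilation `D_δ(ζ,v) = (δζ, δ²v)`. -/
def dilH (δ : ℝ) (p : V × W) : V × W := (δ • p.1, (δ ^ 2) • p.2)

end Heisenberg

/-- If a left-invariant, dilation-scaling, rotation invariant metric `d` on the Heisenberg
group satisfies condition (G) and moreover condition (Eq): `d(o,(e₁,0)) = d(o,(0,f₁)) =: β`,
then `d = β·d_𝔥^α`. -/
theorem conditions_G_Eq_imply_power_of_Koranyi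
    {V W : Type*} [NormedAddCommGroup V] [NormedSpace ℝ V]
    [NormedAddCommGroup W] [NormedSpace ℝ W]
    (ω : V →ₗ[ℝ] V →ₗ[ℝ] W) (hω : ∀ ζ : V, ω ζ ζ = 0)
    (e₁ : V) (f₁ : W) (he₁ : ‖e₁‖ = 1) (hf₁ : ‖f₁‖ = 1)
    (d : V × W → V × W → ℝ) (α : ℝ) (hα0 : 0 < α) (hα1 : α ≤ 1)
    -- `d` is a metric:
    (hself : ∀ p, d p p = 0) (hpos : ∀ p q, p ≠ q → 0 < d p q)
    (hsymm : ∀ p q, d p q = d q p) (htri : ∀ p q r, d p r ≤ d p q + d q r)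
    -- invariance under left translations:
    (hleft : ∀ r p q, d (hMul ω r p) (hMul ω r q) = d p q)
    -- scaling under dilations:
    (hdil : ∀ δ : ℝ, 0 < δ → ∀ p q, d (dilH δ p) (dilH δ q) = δ ^ α * d p q)
    -- rotation invariance:
    (hrotV : ∀ ζ ζ' : V, ‖ζ‖ = ‖ζ'‖ → d 0 (ζ, 0) = d 0 (ζ', 0))
    (hrotW : ∀ v v' : W, ‖v‖ = ‖v'‖ → d 0 ((0 : V), v) = d 0 ((0 : V), v'))
    -- condition (G):
    (hG : ∀ p : V × W, d 0 p =
      (d 0 (p.1, (0 : W)) ^ (4 / α) + d 0 ((0 : V), p.2) ^ (4 / α)) ^ (α / 4))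
    -- condition (Eq):
    (hEq : d 0 (e₁, (0 : W)) = d 0 ((0 : V), f₁)) :
    ∀ p q : V × W, d p q = d 0 (e₁, (0 : W)) * dKor ω p q ^ α := by
  intro p q
  have hαne : α ≠ 0 := hα0.ne'
  have he₁0 : e₁ ≠ 0 := by intro h; rw [h, norm_zero] at he₁; norm_num at he₁
  have hβpos : 0 < d 0 (e₁, (0 : W)) := by
    apply hpos
    intro h
    exact he₁0 (congrArg Prod.fst h).symm
  set β := d 0 (e₁, (0 : W)) with hβ
  have hβ0 : (0 : ℝ) ≤ β := hβpos.le
  -- value on horizontal points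
  have hV : ∀ ζ : V, d 0 (ζ, (0 : W)) = ‖ζ‖ ^ α * β := by
    intro ζ
    rcases eq_or_ne ζ 0 with h | h
    · rw [h, norm_zero, Real.zero_rpow hαne, zero_mul]
      exact hself 0
    · have hn : 0 < ‖ζ‖ := norm_pos_iff.mpr h
      have h1 : d 0 (ζ, (0 : W)) = d 0 (‖ζ‖ • e₁, (0 : W)) := by
        apply hrotV
        rw [norm_smul, he₁, Real.norm_eq_abs, abs_of_nonneg hn.le, mul_one]
      have h4 : d 0 (‖ζ‖ • e₁, (0 : W)) = ‖ζ‖ ^ α * β := by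
        have := hdil ‖ζ‖ hn 0 (e₁, (0 : W))
        simpa [dilH, Prod.mk_zero_zero, ← hβ] using this
      rw [h1, h4]
  -- value on vertical points
  have hW' : ∀ v : W, d 0 ((0 : V), v) = ‖v‖ ^ (α / 2) * β := by
    intro v
    rcases eq_or_ne v 0 with h | h
    · rw [h, norm_zero, Real.zero_rpow (by positivity), zero_mul]
      exact hself 0
    · have hn : 0 < ‖v‖ := norm_pos_iff.mpr h
      set δ : ℝ := ‖v‖ ^ ((1 : ℝ) / 2) with hδdef
      have hδpos : 0 < δ := Real.rpow_pos_of_pos hn _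
      have hδ2 : δ ^ 2 = ‖v‖ := by
        rw [hδdef, ← Real.rpow_natCast (‖v‖ ^ ((1:ℝ)/2)) 2, ← Real.rpow_mul hn.le]
        norm_num
      have hδα : δ ^ α = ‖v‖ ^ (α / 2) := by
        rw [hδdef, ← Real.rpow_mul hn.le]
        ring_nf
      have h1 : d 0 ((0 : V), v) = d 0 ((0 : V), ‖v‖ • f₁) := by
        apply hrotW
        rw [norm_smul, hf₁, Real.norm_eq_abs, abs_of_nonneg hn.le, mul_one]
      have h4 : d 0 ((0 : V), ‖v‖ • f₁) = δ ^ α * d 0 ((0 : V), f₁) := by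
        have := hdil δ hδpos 0 ((0 : V), f₁)
        simpa [dilH, hδ2, Prod.mk_zero_zero] using this
      rw [h1, h4, ← hEq, hδα]
  -- the main pointwise formula at the origin
  have hmain : ∀ r : V × W, d 0 r = β * korGauge r ^ α := by
    intro r
    have hA : (0 : ℝ) ≤ ‖r.1‖ := norm_nonneg _
    have hB : (0 : ℝ) ≤ ‖r.2‖ := norm_nonneg _
    rw [hG r, hV r.1, hW' r.2]
    have e1 : (‖r.1‖ ^ α * β) ^ (4 / α) = ‖r.1‖ ^ (4 : ℝ) * β ^ (4 / α) := by
      rw [Real.mul_rpow (Real.rpow_nonneg hA α) hβ0, ← Real.rpow_mul hA]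
      congr 2
      field_simp
    have e2 : (‖r.2‖ ^ (α / 2) * β) ^ (4 / α) = ‖r.2‖ ^ (2 : ℝ) * β ^ (4 / α) := by
      rw [Real.mul_rpow (Real.rpow_nonneg hB _) hβ0, ← Real.rpow_mul hB]
      congr 2
      field_simp
      ring
    rw [e1, e2]
    have e3 : ‖r.1‖ ^ (4 : ℝ) * β ^ (4 / α) + ‖r.2‖ ^ (2 : ℝ) * β ^ (4 / α)
        = (‖r.1‖ ^ (4 : ℝ) + ‖r.2‖ ^ (2 : ℝ)) * β ^ (4 / α) := by ring
    have hsum : (0 : ℝ) ≤ ‖r.1‖ ^ (4 : ℝ) + ‖r.2‖ ^ (2 : ℝ) := by positivity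
    rw [e3, Real.mul_rpow hsum (Real.rpow_nonneg hβ0 _), ← Real.rpow_mul hβ0]
    have e4 : (4 / α) * (α / 4) = 1 := by field_simp
    rw [e4, Real.rpow_one]
    rw [korGauge, ← Real.rpow_mul (by positivity)]
    have e5 : ‖r.1‖ ^ (4 : ℝ) = ‖r.1‖ ^ (4 : ℕ) := by
      rw [← Real.rpow_natCast ‖r.1‖ 4]; norm_num
    have e6 : ‖r.2‖ ^ (2 : ℝ) = ‖r.2‖ ^ (2 : ℕ) := by
      rw [← Real.rpow_natCast ‖r.2‖ 2]; norm_num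
    rw [e5, e6]
    ring_nf
  -- reduce to the origin by left invariance
  have hq : hMul ω (hInv q) q = 0 := by
    simp [hMul, hInv, hω, Prod.ext_iff]
  have h0 : d p q = d 0 (hMul ω (hInv q) p) := by
    have := hleft (hInv q) p q
    rw [hq] at this
    rw [← this, hsymm]
  rw [h0, hmain, dKor]
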